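/- Let 𝔥 be the 8-dimensional real two-step nilpotent Lie algebra with basis (X_1,…,X_6, Z_1, Z_2) and nontrivial brackets [X_1,X_5] = [X_2,X_3] = Z_1 and [X_1,X_6] = [X_2,X_4] = Z_2. A polynomial function P on 𝔥* is Ad*(G)-invariant (equivalently, P(f + ad*_X f) = P(f) for all X ∈ 𝔥 and f ∈ 𝔥*) if and only if P belongs to the ℝ-subalgebra generated by the four polynomials z_1, z_2, z_1 x_4 − z_2 x_3, and z_1 x_6 − z_2 x_5, where z_i(f) = f(Z_i) and x_k(f) = f(X_k) are the coordinate functions with respect to the dual basis. -/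

import Mathlib

/-- The coadjoint action of the Lie algebra: `(coad X f) W = f ⁅W, X⁆`. -/
def coad {L : Type*} [LieRing L] [LieAlgebra ℝ L] (X : L) (f : Module.Dual ℝ L) :
    Module.Dual ℝ L where
  toFun W := f ⁅W, X⁆
  map_add' a b := by simp [add_lie]
  map_smul' c a := by simp [smul_lie]

/-- The set `{ad*_X ℓ : X ∈ 𝔤, ℓ ∈ 𝔤*}` of all coadjoint tangent vectors. -/
def adStar (L : Type*) [LieRing L] [LieAlgebra ℝ L] : Set (Module.Dual ℝ L) :=
  {g | ∃ (X : L) (ℓ : Module.Dual ℝ L), g = coad X ℓ}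

/-- Coordinates of a linear functional with respect to the dual basis of `B`;
this identifies `𝔤*` with `ι → ℝ`, carrying the canonical topology. -/
noncomputable def coords {ι : Type*} {L : Type*} [LieRing L] [LieAlgebra ℝ L]
    (B : Module.Basis ι ℝ L) (f : Module.Dual ℝ L) : ι → ℝ := fun a => f (B a)

/-- The cortex `Cor(𝔤*)`: the closure (in the canonical topology of the
finite-dimensional space `𝔤*`, transported to coordinates via the dual basis)
of the set `{ad*_X ℓ : X ∈ 𝔤, ℓ ∈ 𝔤*}`. -/
def corSet {ι : Type*} {L : Type*} [LieRing L] [LieAlgebra ℝ L] (B : Module.Basis ι ℝ L) :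
    Set (Module.Dual ℝ L) :=
  {f | coords B f ∈ closure (coords B '' adStar L)}

/-- Structure constants of the 8-dimensional Lie algebra `𝔥`: basis indices
`0,…,5` are `X_1,…,X_6`, index `6` is `Z_1`, index `7` is `Z_2`; the only
nontrivial brackets are `⁅X_1,X_5⁆ = ⁅X_2,X_3⁆ = Z_1`, `⁅X_1,X_6⁆ = ⁅X_2,X_4⁆ = Z_2`. -/
def hBr {V : Type*} [AddCommGroup V] (B : Fin 8 → V) : Fin 8 → Fin 8 → V :=
  fun i j =>
    if i = 0 ∧ j = 4 ∨ i = 1 ∧ j = 2 then B 6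
    else if i = 4 ∧ j = 0 ∨ i = 2 ∧ j = 1 then -B 6
    else if i = 0 ∧ j = 5 ∨ i = 1 ∧ j = 3 then B 7
    else if i = 5 ∧ j = 0 ∨ i = 3 ∧ j = 1 then -B 7
    else 0


section AuxInvariantPolys

open MvPolynomial

noncomputable section
section
variable {α : Type*} (a₀ a₁ a₂ a₃ a₄ a₅ a₆ a₇ : α)
@[simp] lemma vec8_0 : ![a₀,a₁,a₂,a₃,a₄,a₅,a₆,a₇] 0 = a₀ := rfl
@[simp] lemma vec8_1 : ![a₀,a₁,a₂,a₃,a₄,a₅,a₆,a₇] 1 = a₁ := rfl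
@[simp] lemma vec8_2 : ![a₀,a₁,a₂,a₃,a₄,a₅,a₆,a₇] 2 = a₂ := rfl
@[simp] lemma vec8_3 : ![a₀,a₁,a₂,a₃,a₄,a₅,a₆,a₇] 3 = a₃ := rfl
@[simp] lemma vec8_4 : ![a₀,a₁,a₂,a₃,a₄,a₅,a₆,a₇] 4 = a₄ := rfl
@[simp] lemma vec8_5 : ![a₀,a₁,a₂,a₃,a₄,a₅,a₆,a₇] 5 = a₅ := rfl
@[simp] lemma vec8_6 : ![a₀,a₁,a₂,a₃,a₄,a₅,a₆,a₇] 6 = a₆ := rfl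
@[simp] lemma vec8_7 : ![a₀,a₁,a₂,a₃,a₄,a₅,a₆,a₇] 7 = a₇ := rfl
@[simp] lemma vec4_0 (b₀ b₁ b₂ b₃ : α) : ![b₀,b₁,b₂,b₃] 0 = b₀ := rfl
@[simp] lemma vec4_1 (b₀ b₁ b₂ b₃ : α) : ![b₀,b₁,b₂,b₃] 1 = b₁ := rfl
@[simp] lemma vec4_2 (b₀ b₁ b₂ b₃ : α) : ![b₀,b₁,b₂,b₃] 2 = b₂ := rfl
@[simp] lemma vec4_3 (b₀ b₁ b₂ b₃ : α) : ![b₀,b₁,b₂,b₃] 3 = b₃ := rfl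
end

def mymove (a c : Fin 8 → ℝ) : Fin 8 → ℝ :=
  ![c 0 + a 4 * c 6 + a 5 * c 7, c 1 + a 2 * c 6 + a 3 * c 7,
    c 2 - a 1 * c 6, c 3 - a 1 * c 7, c 4 - a 0 * c 6, c 5 - a 0 * c 7, c 6, c 7]



lemma eval_aeval' {n m : ℕ} (d : Fin m → ℝ) (h : Fin n → MvPolynomial (Fin m) ℝ)
    (P : MvPolynomial (Fin n) ℝ) :
    eval d (aeval h P) = eval (fun i => eval d (h i)) P := by
  have h1 : ((aeval d : MvPolynomial (Fin m) ℝ →ₐ[ℝ] ℝ).comp (aeval h)) P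
      = aeval (fun i => aeval d (h i)) P := by
    rw [MvPolynomial.comp_aeval]
  simp only [AlgHom.comp_apply] at h1
  simpa only [← coe_aeval_eq_eval, RingHom.coe_coe] using h1

lemma eq_of_eq_on_ne {ι : Type*} (i : ι) [DecidableEq ι] (φ ψ : (ι → ℝ) → ℝ)
    (hφ : Continuous φ) (hψ : Continuous ψ)
    (h : ∀ c, c i ≠ 0 → φ c = ψ c) : ∀ c, φ c = ψ c := by
  intro c
  set g : ℝ → ℝ := fun t => φ (Function.update c i t) - ψ (Function.update c i t) with hg
  have hcont : Continuous g := by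
    have hu : Continuous fun t : ℝ => Function.update c i t := by
      apply continuous_pi
      intro j
      by_cases hj : j = i
      · subst hj; simpa using continuous_id'
      · simpa [Function.update_of_ne hj] using continuous_const
    exact ((hφ.comp hu).sub (hψ.comp hu))
  have hzero : ∀ t : ℝ, t ≠ 0 → g t = 0 := by
    intro t ht
    have := h (Function.update c i t) (by simpa using ht)
    simp [hg, this]
  have hg0 : g 0 = 0 := by
    have h1 : Filter.Tendsto g (nhdsWithin 0 {(0:ℝ)}ᶜ) (nhds (g 0)) :=
      (hcont.tendsto 0).mono_left nhdsWithin_le_nhds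
    have h2 : Filter.Tendsto g (nhdsWithin 0 {(0:ℝ)}ᶜ) (nhds 0) := by
      apply Filter.Tendsto.congr' _ tendsto_const_nhds
      filter_upwards [self_mem_nhdsWithin] with t ht
      exact (hzero t ht).symm
    exact tendsto_nhds_unique h1 h2
  have hgt : ∀ t, g t = 0 := by
    intro t
    by_cases ht : t = 0
    · subst ht; exact hg0
    · exact hzero t ht
  have := hgt (c i)
  simpa [hg, Function.update_eq_self, sub_eq_zero] using this
def myvec (c : Fin 8 → ℝ) : Fin 4 → ℝ :=
  ![c 6, c 7, c 6 * c 3 - c 7 * c 2, c 6 * c 5 - c 7 * c 4]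
lemma cont_myvec : Continuous myvec := by
  apply continuous_pi
  intro j
  fin_cases j <;> simp [myvec] <;> fun_prop
lemma cont_evalvec (F : MvPolynomial (Fin 4) ℝ) :
    Continuous fun c : Fin 8 → ℝ => eval (myvec c) F :=
  (MvPolynomial.continuous_eval (p := F)).comp cont_myvec

lemma X0_factor (F : MvPolynomial (Fin 4) ℝ)
    (h : ∀ d : Fin 4 → ℝ, d 0 = 0 → eval d F = 0) :
    ∃ F' : MvPolynomial (Fin 4) ℝ, F = X 0 * F' := by
  set e := MvPolynomial.finSuccEquiv ℝ 3 with he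
  have hc : (e F).coeff 0 = 0 := by
    apply MvPolynomial.funext
    intro s
    have h1 := MvPolynomial.eval_eq_eval_mv_eval' s 0 F
    have h2 : eval (Fin.cons (0:ℝ) s) F = 0 := h _ (by simp)
    rw [h2] at h1
    have h3 : Polynomial.eval (0:ℝ) (Polynomial.map (eval s) (e F))
        = eval s ((e F).coeff 0) := by
      rw [← Polynomial.coeff_zero_eq_eval_zero, Polynomial.coeff_map]
    rw [h3] at h1
    simp [← h1]
  have hdiv := Polynomial.divX_mul_X_add (e F)
  rw [hc, map_zero, add_zero] at hdiv
  refine ⟨e.symm ((e F).divX), ?_⟩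
  have hX : (e.symm Polynomial.X : MvPolynomial (Fin 4) ℝ) = X 0 := by
    rw [AlgEquiv.symm_apply_eq, MvPolynomial.finSuccEquiv_X_zero]
  calc F = e.symm (e F) := (AlgEquiv.symm_apply_apply e F).symm
    _ = e.symm ((e F).divX * Polynomial.X) := by rw [hdiv]
    _ = e.symm ((e F).divX) * e.symm Polynomial.X := map_mul _ _ _
    _ = X 0 * e.symm ((e F).divX) := by rw [hX, mul_comm]

/-- Homogenization of `W` with respect to variable 0, clearing denominators in vars 2,3. -/
def homogW (W : MvPolynomial (Fin 4) ℝ) : MvPolynomial (Fin 4) ℝ :=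
  ∑ m ∈ W.support, (C (coeff m W) : MvPolynomial (Fin 4) ℝ) *
    X 0 ^ (m 0 + (W.totalDegree - (m 2 + m 3))) * X 1 ^ m 1 * X 2 ^ m 2 * X 3 ^ m 3

lemma eval_homogW (W : MvPolynomial (Fin 4) ℝ) (z y p q : ℝ) (hz : z ≠ 0) :
    eval ![z, y, p, q] (homogW W) = z ^ W.totalDegree * eval ![z, y, p / z, q / z] W := by
  rw [homogW, map_sum, eval_eq' ![z, y, p / z, q / z] W, Finset.mul_sum]
  apply Finset.sum_congr rfl
  intro m hm
  have hle : m 0 + m 1 + m 2 + m 3 ≤ W.totalDegree := by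
    have := MvPolynomial.le_totalDegree hm
    have hsum : m.sum (fun _ e => e) = m 0 + m 1 + m 2 + m 3 := by
      rw [Finsupp.sum_fintype _ _ (fun _ => rfl), Fin.sum_univ_four]
    omega
  obtain ⟨k, hk⟩ : ∃ k, W.totalDegree = m 2 + m 3 + k := ⟨W.totalDegree - (m 2 + m 3), by omega⟩
  have hsub : W.totalDegree - (m 2 + m 3) = k := by omega
  simp only [map_mul, map_pow, eval_C, eval_X, hsub, hk, Fin.prod_univ_four, Nat.add_sub_cancel_left]
  simp only [Matrix.cons_val_zero, Matrix.cons_val_one, Matrix.head_cons,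
    Matrix.cons_val_two, Matrix.tail_cons, Matrix.cons_val_three]
  rw [div_pow, div_pow]
  field_simp
  ring
lemma descent (P : MvPolynomial (Fin 8) ℝ) :
    ∀ (n : ℕ) (F : MvPolynomial (Fin 4) ℝ),
      (∀ c : Fin 8 → ℝ, c 6 ≠ 0 → (c 6) ^ n * eval c P = eval (myvec c) F) →
      ∃ Q : MvPolynomial (Fin 4) ℝ, ∀ c, eval c P = eval (myvec c) Q := by
  intro n
  induction n with
  | zero =>
    intro F hF
    refine ⟨F, ?_⟩
    apply eq_of_eq_on_ne 6 _ _ (MvPolynomial.continuous_eval (p := P)) (cont_evalvec F)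
    intro c hc
    simpa using hF c hc
  | succ n ih =>
    intro F hF
    have hall : ∀ c : Fin 8 → ℝ, (c 6) ^ (n + 1) * eval c P = eval (myvec c) F := by
      apply eq_of_eq_on_ne 6 _ _
        (((continuous_apply (6 : Fin 8)).pow _).mul (MvPolynomial.continuous_eval (p := P)))
        (cont_evalvec F) hF
    have step1 : ∀ d : Fin 4 → ℝ, d 1 ≠ 0 → eval ![0, d 1, d 2, d 3] F = 0 := by
      intro d hd
      have h1 := hall ![0, 0, -(d 2)/(d 1), 0, -(d 3)/(d 1), 0, 0, d 1]
      have h2 : myvec ![0, 0, -(d 2)/(d 1), 0, -(d 3)/(d 1), 0, 0, d 1] = ![0, d 1, d 2, d 3] := by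
        funext i
        fin_cases i <;> simp [myvec] <;> field_simp
      rw [h2] at h1
      simpa using h1.symm
    have step2 : ∀ d : Fin 4 → ℝ, eval ![0, d 1, d 2, d 3] F = 0 := by
      have hcv : Continuous fun d : Fin 4 → ℝ => (![0, d 1, d 2, d 3] : Fin 4 → ℝ) := by
        apply continuous_pi
        intro j
        fin_cases j <;> simp <;> fun_prop
      exact eq_of_eq_on_ne 1 _ 0 ((MvPolynomial.continuous_eval (p := F)).comp hcv)
        continuous_const step1
    have step3 : ∀ d : Fin 4 → ℝ, d 0 = 0 → eval d F = 0 := by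
      intro d hd
      have hde : d = ![0, d 1, d 2, d 3] := by
        funext i
        fin_cases i <;> simp [hd]
      rw [hde]
      exact step2 d
    obtain ⟨F', rfl⟩ := X0_factor F step3
    apply ih F'
    intro c hc
    have h1 := hF c hc
    rw [map_mul, eval_X] at h1
    have h2 : myvec c 0 = c 6 := rfl
    rw [h2] at h1
    have h3 : c 6 ^ (n + 1) * eval c P = c 6 * (c 6 ^ n * eval c P) := by ring
    rw [h3] at h1
    exact mul_left_cancel₀ hc h1

/-- substitution `x1,x2,x3,x5 ↦ 0`, `x4 ↦ X2`, `x6 ↦ X3`, `z1 ↦ X0`, `z2 ↦ X1`. -/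
def hsub : Fin 8 → MvPolynomial (Fin 4) ℝ := ![0, 0, 0, X 2, 0, X 3, X 0, X 1]

/-- the four generators -/
def gens : Fin 4 → MvPolynomial (Fin 8) ℝ :=
  ![X 6, X 7, X 6 * X 3 - X 7 * X 2, X 6 * X 5 - X 7 * X 4]

lemma key1 (P : MvPolynomial (Fin 8) ℝ)
    (hP : ∀ a c : Fin 8 → ℝ, eval (mymove a c) P = eval c P) (c : Fin 8 → ℝ) (hc : c 6 ≠ 0) :
    eval c P = eval ![c 6, c 7, (c 6 * c 3 - c 7 * c 2) / c 6, (c 6 * c 5 - c 7 * c 4) / c 6]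
      (aeval hsub P) := by
  rw [eval_aeval']
  have h1 := hP ![c 4 / c 6, c 2 / c 6, -(c 1 / c 6), 0, -(c 0 / c 6), 0, 0, 0] c
  rw [← h1]
  have hpt : (fun i => eval ![c 6, c 7, (c 6 * c 3 - c 7 * c 2) / c 6,
      (c 6 * c 5 - c 7 * c 4) / c 6] (hsub i))
      = mymove ![c 4 / c 6, c 2 / c 6, -(c 1 / c 6), 0, -(c 0 / c 6), 0, 0, 0] c := by
    funext i
    fin_cases i <;> simp [mymove, hsub] <;> field_simp <;> ring
  rw [hpt]

lemma key2 (P : MvPolynomial (Fin 8) ℝ)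
    (hP : ∀ a c : Fin 8 → ℝ, eval (mymove a c) P = eval c P) :
    ∃ Q : MvPolynomial (Fin 4) ℝ, aeval gens Q = P := by
  obtain ⟨Q, hQ⟩ := descent P (aeval hsub P).totalDegree (homogW (aeval hsub P)) (by
    intro c hc
    rw [key1 P hP c hc]
    have := eval_homogW (aeval hsub P) (c 6) (c 7)
      (c 6 * c 3 - c 7 * c 2) (c 6 * c 5 - c 7 * c 4) hc
    rw [myvec] at *
    rw [this])
  refine ⟨Q, ?_⟩
  apply MvPolynomial.funext
  intro c
  rw [eval_aeval', hQ c]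
  have hpt : (fun i => eval c (gens i)) = myvec c := by
    funext i
    fin_cases i <;> simp [gens, myvec]
  rw [hpt]
abbrev genSet : Set (MvPolynomial (Fin 8) ℝ) :=
  {MvPolynomial.X 6, MvPolynomial.X 7,
    MvPolynomial.X 6 * MvPolynomial.X 3 - MvPolynomial.X 7 * MvPolynomial.X 2,
    MvPolynomial.X 6 * MvPolynomial.X 5 - MvPolynomial.X 7 * MvPolynomial.X 4}

lemma mem_adjoin_of_inv (P : MvPolynomial (Fin 8) ℝ)
    (hP : ∀ a c : Fin 8 → ℝ, eval (mymove a c) P = eval c P) :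
    P ∈ Algebra.adjoin ℝ genSet := by
  obtain ⟨Q, rfl⟩ := key2 P hP
  have h1 : aeval gens Q ∈ Algebra.adjoin ℝ (Set.range gens) := by
    rw [Algebra.adjoin_range_eq_range_aeval]
    exact ⟨Q, rfl⟩
  refine Algebra.adjoin_mono ?_ h1
  rintro x ⟨i, rfl⟩
  fin_cases i <;> simp [gens, genSet]

lemma inv_of_mem (P : MvPolynomial (Fin 8) ℝ) (h : P ∈ Algebra.adjoin ℝ genSet) :
    ∀ a c : Fin 8 → ℝ, eval (mymove a c) P = eval c P := by
  intro a c
  induction h using Algebra.adjoin_induction with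
  | mem x hx =>
    rcases hx with rfl | rfl | rfl | rfl <;> simp [mymove] <;> ring
  | algebraMap r => simp
  | add p q hp hq ihp ihq => simp [ihp, ihq]
  | mul p q hp hq ihp ihq => simp [ihp, ihq]

lemma lie_sum' {L : Type*} [LieRing L] (x : L) {ι : Type*} (s : Finset ι) (f : ι → L) :
    ⁅x, ∑ j ∈ s, f j⁆ = ∑ j ∈ s, ⁅x, f j⁆ :=
  map_sum (AddMonoidHom.mk' (fun y => ⁅x, y⁆) (lie_add x)) f s

lemma bridge (H : Type) [LieRing H] [LieAlgebra ℝ H] (B : Module.Basis (Fin 8) ℝ H)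
    (hbr : ∀ i j : Fin 8, ⁅B i, B j⁆ = hBr (fun k => B k) i j)
    (a : Fin 8 → ℝ) (f : Module.Dual ℝ H) :
    coords B (f + coad (∑ j, a j • B j) f) = mymove a (coords B f) := by
  funext i
  have hco : coords B (f + coad (∑ j, a j • B j) f) i
      = f (B i) + f ⁅B i, ∑ j, a j • B j⁆ := rfl
  rw [hco]
  have hlie : ⁅B i, ∑ j, a j • B j⁆ = ∑ j, a j • hBr (fun k => B k) i j := by
    rw [lie_sum']
    refine Finset.sum_congr rfl fun j _ => ?_
    rw [lie_smul, hbr]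
  rw [hlie, map_sum]
  simp only [map_smul, smul_eq_mul]
  fin_cases i <;>
    simp [hBr, Fin.sum_univ_eight, mymove, coords] <;> ring

end

end AuxInvariantPolys

/-- For the 8-dimensional Lie algebra `𝔥` as above, a polynomial function `P`
on `𝔥*` (in the dual-basis coordinates) is `Ad*(G)`-invariant, i.e.
`P(f + ad*_X f) = P(f)` for all `X ∈ 𝔥`, `f ∈ 𝔥*`, if and only if `P` lies in the
`ℝ`-subalgebra generated by `z_1, z_2, z_1x_4 − z_2x_3, z_1x_6 − z_2x_5`
(variables `6,7` are `z_1,z_2` and variables `0,…,5` are `x_1,…,x_6`). -/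
theorem invariant_polynomials_h8 (H : Type) [LieRing H] [LieAlgebra ℝ H]
    (B : Module.Basis (Fin 8) ℝ H)
    (hbr : ∀ i j : Fin 8, ⁅B i, B j⁆ = hBr (fun k => B k) i j)
    (P : MvPolynomial (Fin 8) ℝ) :
    (∀ (X : H) (f : Module.Dual ℝ H),
        MvPolynomial.eval (coords B (f + coad X f)) P = MvPolynomial.eval (coords B f) P)
      ↔ P ∈ Algebra.adjoin ℝ
          ({MvPolynomial.X 6, MvPolynomial.X 7,
            MvPolynomial.X 6 * MvPolynomial.X 3 - MvPolynomial.X 7 * MvPolynomial.X 2,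
            MvPolynomial.X 6 * MvPolynomial.X 5 - MvPolynomial.X 7 * MvPolynomial.X 4} :
            Set (MvPolynomial (Fin 8) ℝ)) := by
  constructor
  · intro hinv
    apply mem_adjoin_of_inv P
    intro a c
    set f : Module.Dual ℝ H := ∑ i, c i • B.coord i with hf
    have hcf : coords B f = c := by
      funext i
      simp [coords, hf, Module.Basis.coord_apply, Module.Basis.repr_self, Finsupp.single_apply]
    have h := hinv (∑ j, a j • B j) f
    rwa [bridge H B hbr a f, hcf] at h
  · intro hmem X f
    have h := inv_of_mem P hmem (fun j => B.repr X j) (coords B f)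
    have hb := bridge H B hbr (fun j => B.repr X j) f
    rw [B.sum_repr X] at hb
    rw [hb]
    exact h
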